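/- Let p be a Markov kernel on (X, 𝒳), x* ∈ X, and ε ∈ (0,1) such that p(x, {x*}) ≥ ε for all x ∈ X. Define T on signed measures by Tμ = ∫ p(x, ·) μ(dx) and V by Vμ = ε·μ(X)·δ_{x*}. Then for every probability measure μ, ‖(T − V)μ‖_TV ≤ 1 − ε < 1, and hence ‖T − V‖ restricted to the cone of probability measures is strictly less than 1. -/

import Mathlib

open MeasureTheory ProbabilityTheory

/-- If `p(x, {x*}) ≥ ε` for all `x`, then for every probability measure `μ`, the signed
measure `(T - V)μ = μ.bind p - ε δ_{x*}` has total variation norm at most `1 - ε < 1`,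
where `V μ = ε · μ(X) · δ_{x*}`. -/
theorem T_minus_V_contracts
    {X : Type*} [MeasurableSpace X] [MeasurableSingletonClass X]
    (p : Kernel X X) [IsMarkovKernel p]
    (xstar : X) (ε : ℝ) (hε0 : 0 < ε) (hε1 : ε < 1)
    (hmin : ∀ x : X, ENNReal.ofReal ε ≤ p x {xstar})
    (μ : Measure X) [IsProbabilityMeasure μ] [IsFiniteMeasure (μ.bind p)] :
    ((μ.bind p).toSignedMeasure
        - ε • (Measure.dirac xstar).toSignedMeasure).totalVariation Set.univ
      ≤ ENNReal.ofReal (1 - ε) := by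
  set ν : Measure X := μ.bind p with hν
  set κ : Measure X := ENNReal.ofReal ε • Measure.dirac xstar with hκ
  have hκtop : κ Set.univ ≠ ⊤ := by simp [hκ]
  have hκfin : IsFiniteMeasure κ := ⟨lt_top_iff_ne_top.2 hκtop⟩
  have hνstar : ENNReal.ofReal ε ≤ ν {xstar} := by
    rw [hν, Measure.bind_apply (measurableSet_singleton xstar) p.measurable.aemeasurable]
    calc ENNReal.ofReal ε = ∫⁻ _, ENNReal.ofReal ε ∂μ := by simp
      _ ≤ ∫⁻ x, p x {xstar} ∂μ := lintegral_mono fun x => hmin x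
  have hκν : κ ≤ ν := by
    rw [Measure.le_iff]
    intro i hi
    rw [hκ, Measure.smul_apply, Measure.dirac_apply' _ hi]
    by_cases hxi : xstar ∈ i
    · simp only [Set.indicator_of_mem hxi, Pi.one_apply, smul_eq_mul, mul_one]
      exact hνstar.trans (measure_mono (Set.singleton_subset_iff.2 hxi))
    · simp [Set.indicator_of_notMem hxi]
  -- the Jordan decomposition of the signed measure is ⟨ν - κ, 0⟩
  have hsubfin : IsFiniteMeasure (ν - κ) := inferInstance
  set j : MeasureTheory.JordanDecomposition X :=
    { posPart := ν - κ, negPart := 0,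
      mutuallySingular := Measure.MutuallySingular.zero_right } with hj
  have hdirac : ∀ {i : Set X}, MeasurableSet i →
      ((κ i).toReal : ℝ) = ε * ((Measure.dirac xstar) i).toReal := by
    intro i hi
    rw [hκ, Measure.smul_apply, smul_eq_mul, ENNReal.toReal_mul,
      ENNReal.toReal_ofReal hε0.le]
  have heq : ν.toSignedMeasure - ε • (Measure.dirac xstar).toSignedMeasure
      = j.toSignedMeasure := by
    ext i hi
    rw [MeasureTheory.JordanDecomposition.toSignedMeasure,
      Measure.toSignedMeasure_sub_apply hi]
    rw [MeasureTheory.VectorMeasure.sub_apply, MeasureTheory.VectorMeasure.smul_apply,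
      Measure.toSignedMeasure_apply_measurable hi,
      Measure.toSignedMeasure_apply_measurable hi]
    rw [hj]
    simp only [smul_eq_mul]
    simp only [Measure.real]
    rw [Measure.sub_apply hi hκν,
      ENNReal.toReal_sub_of_le (hκν i) (measure_ne_top ν i), hdirac hi]
    simp
  rw [heq, MeasureTheory.SignedMeasure.totalVariation,
    MeasureTheory.JordanDecomposition.toJordanDecomposition_toSignedMeasure]
  rw [hj]
  simp only [Measure.coe_add, Pi.add_apply, Measure.coe_zero, Pi.zero_apply, add_zero]
  rw [Measure.sub_apply MeasurableSet.univ hκν]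
  have hν1 : ν Set.univ = 1 := by
    rw [hν, Measure.bind_apply MeasurableSet.univ p.measurable.aemeasurable]
    simp
  have hκu : κ Set.univ = ENNReal.ofReal ε := by simp [hκ]
  rw [hν1, hκu, ← ENNReal.ofReal_one, ← ENNReal.ofReal_sub _ hε0.le]
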